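/- Let n ≥ 1 and let μ be a Borel probability measure supported on the unit sphere S^{n−1} ⊂ ℝⁿ. Then for every positive integer k, ∫∫ ⟨x,y⟩^{2k} dμ(x)dμ(y) ≥ (1·3·5⋯(2k−1)) / (n·(n+2)⋯(n+2k−2)) = ∏_{j=1}^{k} (2j−1)/(n+2j−2). -/

import Mathlib

open MeasureTheory Real Finset ProbabilityTheory
open scoped NNReal ENNReal RealInnerProductSpace

namespace SphereEnergyAux

noncomputable def gm : Measure ℝ := gaussianReal 0 1

instance : IsProbabilityMeasure gm := by unfold gm; infer_instance

noncomputable def gam (m : ℕ) : Measure (Fin m → ℝ) := Measure.pi fun _ => gm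

instance (m : ℕ) : IsProbabilityMeasure (gam m) := by unfold gam; infer_instance

def dd (q : ℕ) : ℝ := ∏ j ∈ Finset.range q, (2 * (j : ℝ) + 1)

noncomputable def Mom (p : ℕ) : ℝ := if Even p then dd (p / 2) else 0

lemma dd_succ (q : ℕ) : dd (q + 1) = dd q * (2 * q + 1) := Finset.prod_range_succ _ _

lemma dd_pos (q : ℕ) : 0 < dd q := Finset.prod_pos (fun i _ => by positivity)

lemma Mom_two_mul (q : ℕ) : Mom (2 * q) = dd q := by
  simp [Mom, even_two_mul q, Nat.mul_div_cancel_left q (by norm_num : 0 < 2)]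

lemma Mom_odd {p : ℕ} (hp : ¬ Even p) : Mom p = 0 := if_neg hp

lemma Mom_zero : Mom 0 = 1 := by simpa [dd] using Mom_two_mul 0

lemma gm_eq : gm = volume.withDensity fun x => ENNReal.ofReal (gaussianPDFReal 0 1 x) := by
  rw [gm, gaussianReal_of_var_ne_zero 0 one_ne_zero]; rfl

lemma pdf01 (x : ℝ) : gaussianPDFReal 0 1 x = (√(2*π))⁻¹ * rexp (-x^2/2) := by
  simp [gaussianPDFReal]

lemma integral_gm (f : ℝ → ℝ) : ∫ t, f t ∂gm = ∫ t, f t * gaussianPDFReal 0 1 t := by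
  rw [gm_eq]
  have h1 : (fun x => ENNReal.ofReal (gaussianPDFReal 0 1 x))
      = fun x => ((Real.toNNReal (gaussianPDFReal 0 1 x) : ℝ≥0) : ℝ≥0∞) := rfl
  rw [h1, integral_withDensity_eq_integral_smul
    ((measurable_gaussianPDFReal 0 1).real_toNNReal) f]
  congr 1; ext t
  rw [NNReal.smul_def, smul_eq_mul, Real.coe_toNNReal _ (gaussianPDFReal_nonneg 0 1 t), mul_comm]

lemma integrable_gm_iff {f : ℝ → ℝ} :
    Integrable f gm ↔ Integrable (fun x => f x * gaussianPDFReal 0 1 x) volume := by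
  rw [gm_eq]
  have h1 : (fun x => ENNReal.ofReal (gaussianPDFReal 0 1 x))
      = fun x => ((Real.toNNReal (gaussianPDFReal 0 1 x) : ℝ≥0) : ℝ≥0∞) := rfl
  rw [h1, integrable_withDensity_iff_integrable_smul
    ((measurable_gaussianPDFReal 0 1).real_toNNReal)]
  constructor <;> intro h <;> refine h.congr (Filter.Eventually.of_forall fun t => ?_) <;>
    simp only [NNReal.smul_def, smul_eq_mul,
      Real.coe_toNNReal _ (gaussianPDFReal_nonneg 0 1 t), mul_comm]

lemma gint (p : ℕ) : Integrable (fun t : ℝ => t ^ p) gm := by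
  rw [integrable_gm_iff]
  have hC : ∀ x : ℝ, ‖x ^ p * gaussianPDFReal 0 1 x‖ ≤
      ((p.factorial * Real.exp 1) * (√(2*π))⁻¹) * Real.exp (-(4⁻¹) * x^2) := by
    intro x
    rw [pdf01, norm_mul, norm_mul]
    have h1 : ‖x ^ p‖ ≤ p.factorial * Real.exp |x| := by
      rw [norm_pow, Real.norm_eq_abs]
      have := Real.pow_div_factorial_le_exp (x := |x|) (abs_nonneg x) p
      rw [div_le_iff₀ (by positivity : (0:ℝ) < p.factorial)] at this
      linarith [this]
    have h2 : Real.exp |x| * rexp (-x^2/2) ≤ Real.exp 1 * Real.exp (-(4⁻¹) * x^2) := by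
      rw [← Real.exp_add, ← Real.exp_add]
      apply Real.exp_le_exp.2
      nlinarith [sq_nonneg (|x| - 2), sq_abs x]
    have h3 : ‖(√(2*π))⁻¹‖ = (√(2*π))⁻¹ := by
      rw [Real.norm_eq_abs, abs_of_nonneg]; positivity
    rw [h3]
    have h4 : ‖rexp (-x^2/2)‖ = rexp (-x^2/2) := by
      rw [Real.norm_eq_abs, abs_of_nonneg (Real.exp_pos _).le]
    rw [h4]
    calc ‖x ^ p‖ * ((√(2*π))⁻¹ * rexp (-x^2/2))
        ≤ (p.factorial * Real.exp |x|) * ((√(2*π))⁻¹ * rexp (-x^2/2)) := by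
          apply mul_le_mul_of_nonneg_right h1; positivity
      _ = (p.factorial * (Real.exp |x| * rexp (-x^2/2))) * (√(2*π))⁻¹ := by ring
      _ ≤ (p.factorial * (Real.exp 1 * Real.exp (-(4⁻¹) * x^2))) * (√(2*π))⁻¹ := by
          apply mul_le_mul_of_nonneg_right _ (by positivity)
          apply mul_le_mul_of_nonneg_left h2 (by positivity)
      _ = ((p.factorial * Real.exp 1) * (√(2*π))⁻¹) * Real.exp (-(4⁻¹) * x^2) := by ring
  exact Integrable.mono'
    ((integrable_exp_neg_mul_sq (by norm_num : (0:ℝ) < 4⁻¹)).const_mul _)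
    (((measurable_id.pow_const p).mul (measurable_gaussianPDFReal 0 1)).aestronglyMeasurable)
    (Filter.Eventually.of_forall hC)


lemma gm_neg : MeasurePreserving (fun x : ℝ => -x) gm gm := by
  refine ⟨measurable_neg, ?_⟩
  have h1 : (fun x : ℝ => -x) = (fun x : ℝ => (-1 : ℝ) * x) := by funext x; ring
  rw [gm, h1, gaussianReal_map_const_mul (-1 : ℝ)]
  norm_num

lemma gmoment_odd (p : ℕ) (hp : ¬ Even p) : ∫ t, t ^ p ∂gm = 0 := by
  have h1 : ∫ t, t ^ p ∂gm = ∫ t, (-t) ^ p ∂gm := by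
    conv_lhs => rw [← gm_neg.map_eq]
    rw [integral_map gm_neg.measurable.aemeasurable]
    exact (measurable_id.pow_const p).aestronglyMeasurable
  have h2 : ∀ t : ℝ, (-t) ^ p = -(t ^ p) := fun t => (Nat.odd_iff.2 ?_).neg_pow t
  · simp only [h2, integral_neg] at h1
    linarith
  · rcases Nat.even_or_odd p with h | h
    · exact absurd h hp
    · exact Nat.odd_iff.1 h

lemma gamma_prod (q : ℕ) : (2:ℝ) ^ q * Real.Gamma ((q:ℝ) + 1/2) = √π * dd q := by
  induction q with
  | zero =>
    simp only [Nat.cast_zero, pow_zero, one_mul, zero_add, dd, Finset.range_zero,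
      Finset.prod_empty, mul_one]
    exact Real.Gamma_one_half_eq
  | succ q ih =>
    have h0 : ((q:ℝ) + 1) + 1/2 = ((q:ℝ) + 1/2) + 1 := by ring
    have h1 : Real.Gamma (((q+1:ℕ):ℝ) + 1/2) = ((q:ℝ) + 1/2) * Real.Gamma ((q:ℝ) + 1/2) := by
      push_cast
      rw [h0, Real.Gamma_add_one (by positivity)]
    rw [h1, dd_succ]
    have h2 : (2:ℝ)^(q+1) * (((q:ℝ) + 1/2) * Real.Gamma ((q:ℝ)+1/2))
        = (2*(q:ℝ)+1) * ((2:ℝ)^q * Real.Gamma ((q:ℝ)+1/2)) := by ring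
    rw [h2, ih]
    push_cast
    ring

lemma gmoment_even (q : ℕ) : ∫ t, t ^ (2 * q) ∂gm = dd q := by
  rw [integral_gm]
  have h1 : ∀ x : ℝ, x ^ (2*q) * gaussianPDFReal 0 1 x
      = (fun t : ℝ => t ^ (2*q) * ((√(2*π))⁻¹ * rexp (-t^2/2))) |x| := by
    intro x
    simp only [pdf01]
    rw [(even_two_mul q).pow_abs, sq_abs]
  rw [show (fun t : ℝ => t ^ (2*q) * gaussianPDFReal 0 1 t)
      = (fun t : ℝ => (fun u : ℝ => u ^ (2*q) * ((√(2*π))⁻¹ * rexp (-u^2/2))) |t|)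
      from funext h1]
  rw [integral_comp_abs (f := fun t : ℝ => t ^ (2*q) * ((√(2*π))⁻¹ * rexp (-t^2/2)))]
  have h2 : ∀ x : ℝ, x ^ (2*q) * ((√(2*π))⁻¹ * rexp (-x^2/2))
      = (√(2*π))⁻¹ * (x ^ (2*q) * rexp (-x^2/2)) := fun x => by ring
  simp only [h2]
  rw [MeasureTheory.integral_const_mul]
  have h3 : ∫ x in Set.Ioi (0:ℝ), x ^ (2*q) * rexp (-x^2/2)
      = ∫ x in Set.Ioi (0:ℝ), x ^ (((2*q : ℕ)):ℝ) * rexp (-(1/2) * x ^ (2:ℝ)) := by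
    refine setIntegral_congr_fun measurableSet_Ioi (fun x hx => ?_)
    rw [Real.rpow_natCast, show (2:ℝ) = ((2:ℕ):ℝ) by norm_num, Real.rpow_natCast]
    norm_num
    constructor
    · ring
  rw [h3, integral_rpow_mul_exp_neg_mul_rpow (by norm_num : (0:ℝ) < 2)
    (lt_of_lt_of_le neg_one_lt_zero (by positivity)) (by norm_num : (0:ℝ) < 1/2)]
  have h4 : (-((((2*q:ℕ)):ℝ)+1)/2) = -((q:ℝ) + 1/2) := by push_cast; ring
  have h5 : (((((2*q:ℕ)):ℝ)+1)/2) = (q:ℝ) + 1/2 := by push_cast; ring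
  rw [h4, h5]
  have h6 : (1/2 : ℝ) ^ (-((q:ℝ) + 1/2)) = 2 ^ ((q:ℝ) + 1/2) := by
    rw [one_div, Real.inv_rpow (by norm_num : (0:ℝ) ≤ 2), Real.rpow_neg (by norm_num : (0:ℝ) ≤ 2),
      inv_inv]
  have h7 : (2:ℝ) ^ ((q:ℝ) + 1/2) = 2 ^ q * √2 := by
    rw [Real.rpow_add (by norm_num : (0:ℝ) < 2), Real.rpow_natCast, ← Real.sqrt_eq_rpow]
  rw [h6, h7]
  have h8 : √(2*π) = √2 * √π := Real.sqrt_mul (by norm_num) π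
  have h9 : dd q = (2:ℝ)^q * Real.Gamma ((q:ℝ) + 1/2) / √π := by
    rw [gamma_prod q]
    field_simp
  rw [h8, h9]
  have hs2 : (0:ℝ) < √2 := Real.sqrt_pos.2 (by norm_num)
  have hsp : (0:ℝ) < √π := Real.sqrt_pos.2 Real.pi_pos
  field_simp


lemma gmoment (p : ℕ) : ∫ t, t ^ p ∂gm = Mom p := by
  rcases Nat.even_or_odd p with h | h
  · obtain ⟨q, rfl⟩ := h
    rw [show q + q = 2 * q by ring, gmoment_even, Mom_two_mul]
  · rw [gmoment_odd p (Nat.not_even_iff_odd.2 h), Mom_odd (Nat.not_even_iff_odd.2 h)]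

lemma split_lemma {m : ℕ} (φ : ℝ → ℝ) (ψ : (Fin m → ℝ) → ℝ)
    (hφ : Integrable φ gm) (hψ : Integrable ψ (gam m)) :
    Integrable (fun g : Fin (m+1) → ℝ => φ (g 0) * ψ (fun i => g i.succ)) (gam (m+1)) ∧
    ∫ g, φ (g 0) * ψ (fun i => g i.succ) ∂(gam (m+1))
      = (∫ t, φ t ∂gm) * ∫ h, ψ h ∂(gam m) := by
  have mp := (measurePreserving_piFinSuccAbove (fun _ : Fin (m+1) => gm) 0).symm
  set e := (MeasurableEquiv.piFinSuccAbove (fun _ : Fin (m+1) => ℝ) 0) with he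
  have key : ∀ z : ℝ × (Fin m → ℝ),
      (fun g : Fin (m+1) → ℝ => φ (g 0) * ψ (fun i => g i.succ)) (e.symm z)
        = φ z.1 * ψ z.2 := by
    intro z
    simp only [he, MeasurableEquiv.piFinSuccAbove_symm_apply, Fin.insertNthEquiv,
      Fin.insertNth_zero, Equiv.coe_fn_mk, Fin.cons_zero, Fin.cons_succ, cast_eq]
  constructor
  · rw [show gam (m+1) = Measure.pi (fun _ : Fin (m+1) => gm) from rfl,
      ← mp.integrable_comp_emb (MeasurableEquiv.measurableEmbedding _)]
    have : ((fun g : Fin (m+1) → ℝ => φ (g 0) * ψ (fun i => g i.succ)) ∘ e.symm)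
        = fun z : ℝ × (Fin m → ℝ) => φ z.1 * ψ z.2 := funext key
    rw [this]
    exact hφ.mul_prod hψ
  · rw [show gam (m+1) = Measure.pi (fun _ : Fin (m+1) => gm) from rfl,
      ← mp.integral_comp']
    simp_rw [key]
    exact integral_prod_mul φ ψ


lemma ddfact (j : ℕ) : (2:ℝ)^j * (j.factorial : ℝ) * dd j = ((2*j).factorial : ℝ) := by
  induction j with
  | zero => simp [dd]
  | succ j ih =>
    rw [dd_succ]
    have h2 : 2*(j+1) = (2*j+1) + 1 := by ring
    rw [h2]
    push_cast [Nat.factorial_succ, pow_succ]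
    push_cast at ih
    linear_combination (2*((j:ℝ)+1)*(2*(j:ℝ)+1)) * ih

lemma num_id {j m : ℕ} (h : j ≤ m) :
    (((2*m).choose (2*j) : ℕ) : ℝ) * dd j * dd (m-j) = dd m * ((m.choose j : ℕ) : ℝ) := by
  have hmj : 2*(m-j) = 2*m - 2*j := by omega
  have e1 := ddfact j
  have e2 := ddfact (m-j)
  have e3 := ddfact m
  rw [hmj] at e2
  have h1 : (((2*m).choose (2*j) : ℕ) : ℝ) * ((2*j).factorial : ℝ) * ((2*m-2*j).factorial : ℝ)
      = ((2*m).factorial : ℝ) := by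
    exact_mod_cast congrArg (Nat.cast : ℕ → ℝ)
      (Nat.choose_mul_factorial_mul_factorial (show 2*j ≤ 2*m by omega))
  have h2 : ((m.choose j : ℕ) : ℝ) * (j.factorial : ℝ) * ((m-j).factorial : ℝ)
      = (m.factorial : ℝ) := by
    exact_mod_cast congrArg (Nat.cast : ℕ → ℝ) (Nat.choose_mul_factorial_mul_factorial h)
  have hpow : (2:ℝ)^m = 2^j * 2^(m-j) := by
    rw [← pow_add]; congr 1; omega
  have hpos : ((2:ℝ)^j * (j.factorial : ℝ)) * ((2:ℝ)^(m-j) * ((m-j).factorial : ℝ)) ≠ 0 := by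
    positivity
  apply mul_left_cancel₀ hpos
  calc ((2:ℝ)^j * (j.factorial : ℝ)) * ((2:ℝ)^(m-j) * ((m-j).factorial : ℝ))
        * ((((2*m).choose (2*j) : ℕ) : ℝ) * dd j * dd (m-j))
      = (((2*m).choose (2*j) : ℕ) : ℝ) * ((2:ℝ)^j * (j.factorial : ℝ) * dd j)
        * ((2:ℝ)^(m-j) * ((m-j).factorial : ℝ) * dd (m-j)) := by ring
    _ = (((2*m).choose (2*j) : ℕ) : ℝ) * ((2*j).factorial : ℝ) * ((2*m-2*j).factorial : ℝ) := by
        rw [e1, e2]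
    _ = ((2*m).factorial : ℝ) := h1
    _ = (2:ℝ)^m * (m.factorial : ℝ) * dd m := e3.symm
    _ = ((2:ℝ)^j * (j.factorial : ℝ)) * ((2:ℝ)^(m-j) * ((m-j).factorial : ℝ))
        * (dd m * ((m.choose j : ℕ) : ℝ)) := by rw [hpow, ← h2]; ring


lemma alg_even (m : ℕ) (c s : ℝ) :
    ∑ q ∈ Finset.range (2*m+1),
      (((2*m).choose q : ℕ) : ℝ) * c^q * Mom q * Mom (2*m-q) * s^((2*m-q)/2)
    = dd m * (c^2 + s)^m := by
  rw [← Finset.sum_filter_add_sum_filter_not (Finset.range (2*m+1)) (fun q => Even q)]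
  have hodd : ∑ q ∈ (Finset.range (2*m+1)).filter (fun q => ¬ Even q),
      (((2*m).choose q : ℕ) : ℝ) * c^q * Mom q * Mom (2*m-q) * s^((2*m-q)/2) = 0 := by
    refine Finset.sum_eq_zero (fun q hq => ?_)
    simp only [Finset.mem_filter] at hq
    rw [Mom_odd hq.2]; ring
  rw [hodd, add_zero]
  have heven : ∑ q ∈ (Finset.range (2*m+1)).filter (fun q => Even q),
      (((2*m).choose q : ℕ) : ℝ) * c^q * Mom q * Mom (2*m-q) * s^((2*m-q)/2)
      = ∑ j ∈ Finset.range (m+1),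
        (((2*m).choose (2*j) : ℕ) : ℝ) * c^(2*j) * Mom (2*j) * Mom (2*m-2*j)
          * s^((2*m-2*j)/2) := by
    refine Finset.sum_nbij' (fun q => q/2) (fun j => 2*j) ?_ ?_ ?_ ?_ ?_
    · intro q hq
      simp only [Finset.mem_filter, Finset.mem_range, Nat.even_iff] at hq ⊢
      omega
    · intro j hj
      simp only [Finset.mem_filter, Finset.mem_range, Nat.even_iff] at hj ⊢
      omega
    · intro q hq
      simp only [Finset.mem_filter, Finset.mem_range, Nat.even_iff] at hq
      show 2 * (q/2) = q
      omega
    · intro j hj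
      show (2*j)/2 = j
      omega
    · intro q hq
      simp only [Finset.mem_filter, Finset.mem_range, Nat.even_iff] at hq
      have : 2 * (q/2) = q := by omega
      rw [this]
  rw [heven]
  have hterm : ∀ j ∈ Finset.range (m+1),
      (((2*m).choose (2*j) : ℕ) : ℝ) * c^(2*j) * Mom (2*j) * Mom (2*m-2*j) * s^((2*m-2*j)/2)
      = dd m * (((m.choose j : ℕ) : ℝ) * (c^2)^j * s^(m-j)) := by
    intro j hj
    have hjm : j ≤ m := by simp only [Finset.mem_range] at hj; omega
    have h1 : 2*m - 2*j = 2*(m-j) := by omega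
    have h2 : (2*m-2*j)/2 = m - j := by omega
    rw [h2, h1, Mom_two_mul, Mom_two_mul, pow_mul]
    have := num_id hjm
    linear_combination ((c^2)^j * s^(m-j)) * this
  rw [Finset.sum_congr rfl hterm, ← Finset.mul_sum, add_pow]
  congr 1
  refine Finset.sum_congr rfl (fun j hj => by ring)

lemma alg_odd (p : ℕ) (hp : ¬ Even p) (c s : ℝ) :
    ∑ q ∈ Finset.range (p+1),
      ((p.choose q : ℕ) : ℝ) * c^q * Mom q * Mom (p-q) * s^((p-q)/2) = 0 := by
  refine Finset.sum_eq_zero (fun q hq => ?_)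
  simp only [Finset.mem_range] at hq
  rcases Nat.even_or_odd q with h | h
  · have : ¬ Even (p - q) := by
      rw [Nat.even_iff] at h ⊢
      rw [Nat.even_iff] at hp
      omega
    rw [Mom_odd this]; ring
  · rw [Mom_odd (Nat.not_even_iff_odd.2 h)]; ring

noncomputable def asc2 (a : ℝ) (r : ℕ) : ℝ := ∏ i ∈ Finset.range r, (a + 2*(i:ℝ))

lemma asc2_succ (a : ℝ) (r : ℕ) : asc2 a (r+1) = asc2 a r * (a + 2*r) :=
  Finset.prod_range_succ _ _

lemma vand (a b : ℝ) : ∀ k : ℕ,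
    ∑ j ∈ Finset.range (k+1), ((k.choose j : ℕ) : ℝ) * asc2 a j * asc2 b (k-j)
      = asc2 (a+b) k := by
  intro k
  induction k with
  | zero => simp [asc2]
  | succ k ih =>
    have hsplit : ∑ j ∈ Finset.range (k+2),
          (((k+1).choose j : ℕ) : ℝ) * asc2 a j * asc2 b (k+1-j)
        = (∑ j ∈ Finset.range (k+2), ((k.choose j : ℕ) : ℝ) * asc2 a j * asc2 b (k+1-j))
          + ∑ j ∈ Finset.range (k+2),
            ((((k+1).choose j : ℕ) : ℝ) - ((k.choose j : ℕ) : ℝ)) * asc2 a j * asc2 b (k+1-j) := by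
      rw [← Finset.sum_add_distrib]
      exact Finset.sum_congr rfl (fun j hj => by ring)
    have hT1 : ∑ j ∈ Finset.range (k+2), ((k.choose j : ℕ) : ℝ) * asc2 a j * asc2 b (k+1-j)
        = ∑ j ∈ Finset.range (k+1),
            ((k.choose j : ℕ) : ℝ) * asc2 a j * (asc2 b (k-j) * (b + 2*((k:ℝ)-j))) := by
      rw [Finset.sum_range_succ, Nat.choose_succ_self]
      simp only [Nat.cast_zero, zero_mul, add_zero]
      refine Finset.sum_congr rfl (fun j hj => ?_)
      simp only [Finset.mem_range] at hj
      have hj' : j ≤ k := by omega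
      have h1 : k + 1 - j = (k - j) + 1 := by omega
      rw [h1, asc2_succ]
      rw [Nat.cast_sub hj']
    have hT2 : ∑ j ∈ Finset.range (k+2),
          ((((k+1).choose j : ℕ) : ℝ) - ((k.choose j : ℕ) : ℝ)) * asc2 a j * asc2 b (k+1-j)
        = ∑ j ∈ Finset.range (k+1),
            ((k.choose j : ℕ) : ℝ) * (asc2 a j * (a + 2*(j:ℝ))) * asc2 b (k-j) := by
      rw [Finset.sum_range_succ']
      simp only [Nat.choose_zero_right, Nat.cast_one, sub_self, zero_mul, add_zero]
      refine Finset.sum_congr rfl (fun j hj => ?_)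
      have h1 : (k+1).choose (j+1) = k.choose j + k.choose (j+1) := Nat.choose_succ_succ k j
      have h2 : k + 1 - (j+1) = k - j := by omega
      rw [h1, h2, asc2_succ]
      push_cast
      ring
    rw [hsplit, hT1, hT2, ← Finset.sum_add_distrib]
    have : ∑ j ∈ Finset.range (k+1),
          (((k.choose j : ℕ) : ℝ) * asc2 a j * (asc2 b (k-j) * (b + 2*((k:ℝ)-j)))
            + ((k.choose j : ℕ) : ℝ) * (asc2 a j * (a + 2*(j:ℝ))) * asc2 b (k-j))
        = (a + b + 2*k) * ∑ j ∈ Finset.range (k+1),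
            ((k.choose j : ℕ) : ℝ) * asc2 a j * asc2 b (k-j) := by
      rw [Finset.mul_sum]
      exact Finset.sum_congr rfl (fun j hj => by ring)
    rw [this, ih, asc2_succ]
    push_cast
    ring


lemma L1 (m : ℕ) : ∀ (c : Fin m → ℝ) (p : ℕ),
    Integrable (fun g : Fin m → ℝ => (∑ i, c i * g i)^p) (gam m) ∧
    ∫ g, (∑ i, c i * g i)^p ∂(gam m) = Mom p * (∑ i, (c i)^2)^(p/2) := by
  induction m with
  | zero =>
    intro c p
    have h0 : (fun g : Fin 0 → ℝ => (∑ i, c i * g i)^p) = fun _ => (0:ℝ)^p :=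
      funext fun g => by simp
    have h1 : (∑ i, (c i)^2) = (0:ℝ) := by simp
    constructor
    · rw [h0]; exact integrable_const _
    · rw [h0, h1, integral_const]
      simp only [probReal_univ, one_smul]
      rcases Nat.eq_zero_or_pos p with hp | hp
      · subst hp; simp [Mom_zero]
      · rw [zero_pow (by omega : p ≠ 0)]
        rcases Nat.even_or_odd p with h | h
        · rw [zero_pow (by
            obtain ⟨r, hr⟩ := h
            omega : p/2 ≠ 0), mul_zero]
        · rw [Mom_odd (Nat.not_even_iff_odd.2 h), zero_mul]
  | succ m ih =>
    intro c p
    set s : ℝ := ∑ i : Fin m, (c (Fin.succ i))^2 with hs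
    have hφ : ∀ q : ℕ, Integrable (fun t : ℝ => (c 0 * t)^q) gm := by
      intro q
      have : (fun t : ℝ => (c 0 * t)^q) = fun t : ℝ => (c 0)^q * t^q := by
        funext t; rw [mul_pow]
      rw [this]
      exact (gint q).const_mul _
    have hφval : ∀ q : ℕ, ∫ t, (c 0 * t)^q ∂gm = (c 0)^q * Mom q := by
      intro q
      have : (fun t : ℝ => (c 0 * t)^q) = fun t : ℝ => (c 0)^q * t^q := by
        funext t; rw [mul_pow]
      rw [this, integral_const_mul, gmoment]
    have hsplit := fun q : ℕ => split_lemma (fun t => (c 0 * t)^q)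
      (fun h : Fin m → ℝ => (∑ i, c (Fin.succ i) * h i)^(p-q))
      (hφ q) (ih (fun i => c (Fin.succ i)) (p-q)).1
    have hpt : (fun g : Fin (m+1) → ℝ => (∑ i, c i * g i)^p)
        = fun g : Fin (m+1) → ℝ => ∑ q ∈ Finset.range (p+1),
            ((p.choose q : ℕ) : ℝ) *
              ((c 0 * g 0)^q * (∑ i : Fin m, c (Fin.succ i) * g (Fin.succ i))^(p-q)) := by
      funext g
      rw [Fin.sum_univ_succ, add_pow]
      exact Finset.sum_congr rfl (fun q hq => by ring)
    constructor
    · rw [hpt]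
      exact integrable_finset_sum _ (fun q _ => ((hsplit q).1.const_mul _))
    · rw [hpt, integral_finset_sum _ (fun q _ => ((hsplit q).1.const_mul _))]
      have hterm : ∀ q ∈ Finset.range (p+1),
          ∫ g : Fin (m+1) → ℝ, ((p.choose q : ℕ) : ℝ) *
              ((c 0 * g 0)^q * (∑ i : Fin m, c (Fin.succ i) * g (Fin.succ i))^(p-q))
            ∂(gam (m+1))
          = ((p.choose q : ℕ) : ℝ) * (c 0)^q * Mom q * Mom (p-q) * s^((p-q)/2) := by
        intro q hq
        rw [MeasureTheory.integral_const_mul, (hsplit q).2, hφval q,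
          (ih (fun i => c (Fin.succ i)) (p-q)).2]
        ring
      rw [Finset.sum_congr rfl hterm]
      have hsum : (∑ i : Fin (m+1), (c i)^2) = (c 0)^2 + s := by
        rw [Fin.sum_univ_succ]
      rw [hsum]
      rcases Nat.even_or_odd p with h | h
      · obtain ⟨mm, hmm⟩ := h
        have hp2 : p = 2*mm := by omega
        subst hp2
        have hdiv : (2*mm)/2 = mm := by omega
        rw [hdiv, alg_even mm (c 0) s, Mom_two_mul]
      · rw [alg_odd p (Nat.not_even_iff_odd.2 h) (c 0) s,
          Mom_odd (Nat.not_even_iff_odd.2 h), zero_mul]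

lemma dd_asc2 (q : ℕ) : dd q = asc2 1 q :=
  Finset.prod_congr rfl (fun i _ => by ring)

lemma L3 (m : ℕ) : ∀ k : ℕ,
    Integrable (fun g : Fin m → ℝ => (∑ i, (g i)^2)^k) (gam m) ∧
    ∫ g, (∑ i, (g i)^2)^k ∂(gam m) = asc2 (m:ℝ) k := by
  induction m with
  | zero =>
    intro k
    have h0 : (fun g : Fin 0 → ℝ => (∑ i, (g i)^2)^k) = fun _ => (0:ℝ)^k :=
      funext fun g => by simp
    constructor
    · rw [h0]; exact integrable_const _
    · rw [h0, integral_const]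
      simp only [probReal_univ, one_smul]
      rcases Nat.eq_zero_or_pos k with hk | hk
      · subst hk; simp [asc2]
      · rw [zero_pow (by omega : k ≠ 0), asc2, Finset.prod_eq_zero
          (Finset.mem_range.2 hk : 0 ∈ Finset.range k) (by norm_num)]
  | succ m ih =>
    intro k
    have hφ : ∀ q : ℕ, Integrable (fun t : ℝ => (t^2)^q) gm := by
      intro q
      have : (fun t : ℝ => (t^2)^q) = fun t : ℝ => t^(2*q) := by
        funext t; rw [← pow_mul, mul_comm]
      rw [this]; exact gint _
    have hφval : ∀ q : ℕ, ∫ t, (t^2)^q ∂gm = dd q := by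
      intro q
      have : (fun t : ℝ => (t^2)^q) = fun t : ℝ => t^(2*q) := by
        funext t; rw [← pow_mul, mul_comm]
      rw [this, gmoment, Mom_two_mul]
    have hsplit := fun q : ℕ => split_lemma (fun t => (t^2)^q)
      (fun h : Fin m → ℝ => (∑ i, (h i)^2)^(k-q)) (hφ q) (ih (k-q)).1
    have hpt : (fun g : Fin (m+1) → ℝ => (∑ i, (g i)^2)^k)
        = fun g : Fin (m+1) → ℝ => ∑ q ∈ Finset.range (k+1),
            ((k.choose q : ℕ) : ℝ) *
              (((g 0)^2)^q * (∑ i : Fin m, (g (Fin.succ i))^2)^(k-q)) := by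
      funext g
      rw [Fin.sum_univ_succ, add_pow]
      exact Finset.sum_congr rfl (fun q hq => by ring)
    constructor
    · rw [hpt]
      exact integrable_finset_sum _ (fun q _ => ((hsplit q).1.const_mul _))
    · rw [hpt, integral_finset_sum _ (fun q _ => ((hsplit q).1.const_mul _))]
      have hterm : ∀ q ∈ Finset.range (k+1),
          ∫ g : Fin (m+1) → ℝ, ((k.choose q : ℕ) : ℝ) *
              (((g 0)^2)^q * (∑ i : Fin m, (g (Fin.succ i))^2)^(k-q)) ∂(gam (m+1))
          = ((k.choose q : ℕ) : ℝ) * asc2 1 q * asc2 (m:ℝ) (k-q) := by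
        intro q hq
        rw [MeasureTheory.integral_const_mul, (hsplit q).2, hφval q, (ih (k-q)).2, dd_asc2]
        ring
      rw [Finset.sum_congr rfl hterm, vand 1 (m:ℝ) k]
      have : ((1:ℝ) + m) = ((m+1 : ℕ) : ℝ) := by push_cast; ring
      rw [this]


lemma expand_pow {n : ℕ} (p : ℕ) (t : Fin n → ℝ) :
    (∑ i, t i)^p = ∑ f : Fin p → Fin n, ∏ j, t (f j) := by
  have h1 : (∑ i, t i)^p = ∏ _j : Fin p, (∑ i, t i) := by
    rw [Finset.prod_const, Finset.card_univ, Fintype.card_fin]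
  rw [h1, Finset.prod_univ_sum (fun _ : Fin p => (Finset.univ : Finset (Fin n)))
    (fun _ i => t i), Fintype.piFinset_univ]

lemma asc2_pos {n : ℕ} (hn : 1 ≤ n) (r : ℕ) : 0 < asc2 (n:ℝ) r := by
  refine Finset.prod_pos (fun i _ => ?_)
  have : (1:ℝ) ≤ (n:ℝ) := by exact_mod_cast hn
  positivity

end SphereEnergyAux

open SphereEnergyAux

/-- Energy lower bound on the sphere: the `2k`-th inner-product energy of any Borel
probability measure on `S^{n-1}` is at least `∏_{j=1}^k (2j-1)/(n+2j-2)`. -/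
theorem sphere_energy_lower_bound (n : ℕ) (hn : 1 ≤ n)
    (μ : Measure (EuclideanSpace ℝ (Fin n))) [IsProbabilityMeasure μ]
    (hμ : μ (Metric.sphere (0 : EuclideanSpace ℝ (Fin n)) 1) = 1)
    (k : ℕ) (hk : 0 < k) :
    (∫ x, ∫ y, ⟪x, y⟫ ^ (2 * k) ∂μ ∂μ)
      ≥ ∏ j ∈ Finset.range k, (2 * (j : ℝ) + 1) / ((n : ℝ) + 2 * j) := by
  classical
  -- a.e. the point is on the unit sphere
  have hae : ∀ᵐ x ∂μ, ∑ i, (x i)^2 = (1:ℝ) := by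
    have hs : MeasurableSet (Metric.sphere (0 : EuclideanSpace ℝ (Fin n)) 1) :=
      Metric.isClosed_sphere.measurableSet
    have h0 : μ (Metric.sphere (0 : EuclideanSpace ℝ (Fin n)) 1)ᶜ = 0 := by
      rw [measure_compl hs (measure_ne_top μ _), hμ, measure_univ, tsub_self]
    have h1 : ∀ᵐ x ∂μ, x ∈ Metric.sphere (0 : EuclideanSpace ℝ (Fin n)) 1 := by
      rw [ae_iff]
      convert h0 using 2
      rfl
    refine h1.mono (fun x hx => ?_)
    have hnorm : ‖x‖ = 1 := by simpa using hx
    rw [EuclideanSpace.norm_eq] at hnorm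
    have h2 : ∑ i, ‖x i‖^2 = 1 := Real.sqrt_eq_one.1 hnorm
    simpa [sq_abs] using h2
  -- coordinates are measurable
  have hcoord : ∀ i : Fin n, Measurable (fun x : EuclideanSpace ℝ (Fin n) => x i) := fun i =>
    (measurable_pi_apply i).comp (WithLp.measurable_ofLp 2 (Fin n → ℝ))
  have hmeasprod : ∀ f : Fin (2*k) → Fin n, Measurable (fun x : EuclideanSpace ℝ (Fin n) => ∏ j, x (f j)) :=
    fun f => Finset.measurable_prod Finset.univ (fun j _ => hcoord (f j))
  -- integrability of monomials w.r.t. μ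
  have intμ : ∀ f : Fin (2*k) → Fin n, Integrable (fun x : EuclideanSpace ℝ (Fin n) => ∏ j, x (f j)) μ := by
    intro f
    refine Integrable.mono' (integrable_const (1:ℝ)) (hmeasprod f).aestronglyMeasurable ?_
    refine hae.mono (fun x hx => ?_)
    rw [Real.norm_eq_abs, Finset.abs_prod]
    refine Finset.prod_le_one (fun j _ => abs_nonneg _) (fun j _ => ?_)
    have h1 : (x (f j))^2 ≤ 1 := by
      rw [← hx]
      exact Finset.single_le_sum (f := fun i => (x i)^2) (fun i _ => sq_nonneg (x i))
        (Finset.mem_univ (f j))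
    exact abs_le_one_iff_mul_self_le_one.2 (by nlinarith)
  -- integrability of monomials w.r.t. the Gaussian
  have monγ : ∀ f : Fin (2*k) → Fin n, Integrable (fun g : Fin n → ℝ => ∏ j, g (f j)) (gam n) := by
    intro f
    have hW : Integrable (fun g : Fin n → ℝ => (∑ i, (g i)^2 + 1)^(2*k)) (gam n) := by
      have hw : (fun g : Fin n → ℝ => (∑ i, (g i)^2 + 1)^(2*k))
          = fun g => ∑ q ∈ Finset.range (2*k+1),
              ((∑ i, (g i)^2)^q * ((2*k).choose q : ℝ)) := by
        funext g
        rw [add_pow]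
        simp [one_pow]
      rw [hw]
      exact integrable_finset_sum _ (fun q _ => ((L3 n q).1).mul_const _)
    refine Integrable.mono' hW
      (Finset.measurable_prod Finset.univ
        (fun j _ => measurable_pi_apply (f j))).aestronglyMeasurable
      (Filter.Eventually.of_forall (fun g => ?_))
    rw [Real.norm_eq_abs, Finset.abs_prod]
    have hb : ∀ j : Fin (2*k), |g (f j)| ≤ ∑ i, (g i)^2 + 1 := by
      intro j
      have h1 : (g (f j))^2 ≤ ∑ i, (g i)^2 :=
        Finset.single_le_sum (f := fun i => (g i)^2) (fun i _ => sq_nonneg _)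
          (Finset.mem_univ (f j))
      nlinarith [sq_nonneg (|g (f j)| - 1), sq_abs (g (f j))]
    calc ∏ j, |g (f j)| ≤ ∏ _j : Fin (2*k), (∑ i, (g i)^2 + 1) :=
          Finset.prod_le_prod (fun j _ => abs_nonneg _) (fun j _ => hb j)
      _ = (∑ i, (g i)^2 + 1)^(2*k) := by
          rw [Finset.prod_const, Finset.card_univ, Fintype.card_fin]
  set aa : (Fin (2*k) → Fin n) → ℝ := fun f => ∫ x, ∏ j, x (f j) ∂μ with haa
  set bb : (Fin (2*k) → Fin n) → ℝ := fun f => ∫ g, ∏ j, g (f j) ∂(gam n) with hbb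
  -- pointwise identity: the Gaussian pairing of the monomial vector
  have ident : ∀ x : Fin n → ℝ,
      ∑ f : Fin (2*k) → Fin n, (∏ j, x (f j)) * bb f = dd k * (∑ i, (x i)^2)^k := by
    intro x
    have h1 : ∫ g, (∑ i, x i * g i)^(2*k) ∂(gam n)
        = Mom (2*k) * (∑ i, (x i)^2)^((2*k)/2) := (L1 n x (2*k)).2
    rw [Mom_two_mul, Nat.mul_div_cancel_left k (by norm_num : 0 < 2)] at h1
    rw [← h1]
    have h2 : ∀ g : Fin n → ℝ, (∑ i, x i * g i)^(2*k)
        = ∑ f : Fin (2*k) → Fin n, (∏ j, x (f j)) * ∏ j, g (f j) := by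
      intro g
      rw [expand_pow (2*k) (fun i => x i * g i)]
      exact Finset.sum_congr rfl (fun f _ => Finset.prod_mul_distrib)
    calc ∑ f : Fin (2*k) → Fin n, (∏ j, x (f j)) * bb f
        = ∑ f : Fin (2*k) → Fin n, ∫ g, (∏ j, x (f j)) * ∏ j, g (f j) ∂(gam n) := by
          exact Finset.sum_congr rfl (fun f _ => (MeasureTheory.integral_const_mul _ _).symm)
      _ = ∫ g, ∑ f : Fin (2*k) → Fin n, (∏ j, x (f j)) * ∏ j, g (f j) ∂(gam n) :=
          (integral_finset_sum _ (fun f _ => (monγ f).const_mul _)).symm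
      _ = ∫ g, (∑ i, x i * g i)^(2*k) ∂(gam n) := by
          exact integral_congr_ae (Filter.Eventually.of_forall (fun g => (h2 g).symm))
  -- cross term evaluation
  have cross : ∑ f : Fin (2*k) → Fin n, aa f * bb f = dd k := by
    have h1 : ∑ f : Fin (2*k) → Fin n, aa f * bb f
        = ∫ x, ∑ f : Fin (2*k) → Fin n, (∏ j, x (f j)) * bb f ∂μ := by
      rw [integral_finset_sum _ (fun f _ => (intμ f).mul_const _)]
      exact Finset.sum_congr rfl (fun f _ => (MeasureTheory.integral_mul_const _ _).symm)
    rw [h1]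
    have h2 : ∀ᵐ x ∂μ, ∑ f : Fin (2*k) → Fin n, (∏ j, x (f j)) * bb f = dd k := by
      refine hae.mono (fun x hx => ?_)
      rw [ident x, hx, one_pow, mul_one]
    rw [integral_congr_ae h2, integral_const, probReal_univ, one_smul]
  -- gaussian energy evaluation
  have yval : ∑ f : Fin (2*k) → Fin n, bb f * bb f = dd k * asc2 (n:ℝ) k := by
    have h1 : ∑ f : Fin (2*k) → Fin n, bb f * bb f
        = ∫ g, ∑ f : Fin (2*k) → Fin n, (∏ j, g (f j)) * bb f ∂(gam n) := by
      rw [integral_finset_sum _ (fun f _ => (monγ f).mul_const _)]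
      exact Finset.sum_congr rfl (fun f _ => (MeasureTheory.integral_mul_const _ _).symm)
    rw [h1]
    have h2 : (fun g : Fin n → ℝ => ∑ f : Fin (2*k) → Fin n, (∏ j, g (f j)) * bb f)
        = fun g => dd k * (∑ i, (g i)^2)^k := funext ident
    rw [h2, MeasureTheory.integral_const_mul, (L3 n k).2]
  -- energy expansion
  have energy : (∫ x, ∫ y, ⟪x, y⟫ ^ (2 * k) ∂μ ∂μ) = ∑ f : Fin (2*k) → Fin n, aa f * aa f := by
    have hinner : ∀ x y : EuclideanSpace ℝ (Fin n), (⟪x, y⟫ : ℝ) = ∑ i, x i * y i := by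
      intro x y
      simp [PiLp.inner_apply, RCLike.inner_apply, conj_trivial]
      exact Finset.sum_congr rfl (fun i _ => mul_comm _ _)
    have h1 : ∀ x : EuclideanSpace ℝ (Fin n), ∫ y, (⟪x, y⟫ : ℝ) ^ (2*k) ∂μ
        = ∑ f : Fin (2*k) → Fin n, (∏ j, x (f j)) * aa f := by
      intro x
      have h2 : ∀ y : EuclideanSpace ℝ (Fin n), (⟪x, y⟫ : ℝ) ^ (2*k)
          = ∑ f : Fin (2*k) → Fin n, (∏ j, x (f j)) * ∏ j, y (f j) := by
        intro y
        rw [hinner x y, expand_pow (2*k) (fun i => x i * y i)]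
        exact Finset.sum_congr rfl (fun f _ => Finset.prod_mul_distrib)
      calc ∫ y, (⟪x, y⟫ : ℝ) ^ (2*k) ∂μ
          = ∫ y, ∑ f : Fin (2*k) → Fin n, (∏ j, x (f j)) * ∏ j, y (f j) ∂μ := by
            exact integral_congr_ae (Filter.Eventually.of_forall (fun y => h2 y))
        _ = ∑ f : Fin (2*k) → Fin n, ∫ y, (∏ j, x (f j)) * ∏ j, y (f j) ∂μ :=
            integral_finset_sum _ (fun f _ => (intμ f).const_mul _)
        _ = ∑ f : Fin (2*k) → Fin n, (∏ j, x (f j)) * aa f :=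
            Finset.sum_congr rfl (fun f _ => MeasureTheory.integral_const_mul _ _)
    have h3 : (fun x : EuclideanSpace ℝ (Fin n) => ∫ y, (⟪x, y⟫ : ℝ) ^ (2*k) ∂μ)
        = fun x : EuclideanSpace ℝ (Fin n) => ∑ f : Fin (2*k) → Fin n, (∏ j, x (f j)) * aa f := funext h1
    rw [h3, integral_finset_sum _ (fun f _ => (intμ f).mul_const _)]
    exact Finset.sum_congr rfl (fun f _ => MeasureTheory.integral_mul_const _ _)
  -- Cauchy-Schwarz
  have hcs := Finset.sum_mul_sq_le_sq_mul_sq Finset.univ aa bb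
  rw [energy]
  have htarget : ∏ j ∈ Finset.range k, (2 * (j : ℝ) + 1) / ((n : ℝ) + 2 * j)
      = dd k / asc2 (n:ℝ) k := by
    rw [dd, asc2, ← Finset.prod_div_distrib]
  rw [htarget, ge_iff_le, div_le_iff₀ (asc2_pos hn k)]
  have h4 : (∑ f : Fin (2*k) → Fin n, aa f * bb f)^2
      ≤ (∑ f : Fin (2*k) → Fin n, aa f^2) * (∑ f : Fin (2*k) → Fin n, bb f^2) := hcs
  rw [cross] at h4
  have h5 : ∑ f : Fin (2*k) → Fin n, aa f ^ 2 = ∑ f : Fin (2*k) → Fin n, aa f * aa f :=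
    Finset.sum_congr rfl (fun f _ => pow_two (aa f))
  have h6 : ∑ f : Fin (2*k) → Fin n, bb f ^ 2 = dd k * asc2 (n:ℝ) k := by
    rw [← yval]
    exact Finset.sum_congr rfl (fun f _ => pow_two (bb f))
  rw [h5, h6] at h4
  nlinarith [h4, dd_pos k, asc2_pos hn k]
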